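/- arXiv:1702.06049 — 2 statements merged into one kernel-verified Lean document; each statement's English description precedes it below -/
import Mathlib

section
/- Let (S,Σ,m) be a σ-finite measure space, let X be a closed linear subspace of L¹(m), and let (T_n) be a sequence of bounded linear operators from L¹(m) to itself such that lim_n ‖T_n f − f‖₁ = 0 for every f ∈ L¹(m). Assume: (1) T_n(X) ⊆ X for every n, and the image T_n(B_X) of the closed unit ball of X is relatively weakly compact in L¹(m); (2) for every n, whenever a norm-bounded sequence (f_k) in L¹(m) converges locally in measure to g ∈ L¹(m), the sequence (T_n f_k) converges locally in measure to T_n g. Then X is nicely placed: if a sequence (f_k) in the closed unit ball B_X of X converges locally in measure to some g ∈ L¹(m), then g ∈ B_X. -/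
open MeasureTheory Filter Topology
open scoped ENNReal

noncomputable section

/-- A sequence of functions converges locally in measure if it converges in measure on every
measurable set of finite measure. -/
def TendstoLocallyInMeasure {α E : Type*} [MeasurableSpace α] (μ : Measure α)
    [Dist E] (f : ℕ → α → E) (g : α → E) : Prop :=
  ∀ A : Set α, MeasurableSet A → μ A < ⊤ →
    ∀ ε : ℝ, 0 < ε → Tendsto (fun i => (μ.restrict A) {x | ε ≤ dist (f i x) (g x)}) atTop (𝓝 0)

lemma tendstoInMeasure_comp' {α E : Type*} [MeasurableSpace α] {μ : Measure α} [EDist E]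
    {f : ℕ → α → E} {g : α → E} (h : TendstoInMeasure μ f atTop g) {s : ℕ → ℕ}
    (hs : Tendsto s atTop atTop) : TendstoInMeasure μ (fun k => f (s k)) atTop g :=
  fun ε hε => (h ε hε).comp hs

/-- Diagonal extraction: a sequence converging locally in measure on a σ-finite measure space
has a subsequence converging almost everywhere. -/
lemma TendstoLocallyInMeasure.exists_seq_tendsto_ae' {α : Type*} [MeasurableSpace α]
    {μ : Measure α} [SigmaFinite μ] {f : ℕ → α → ℝ} {g : α → ℝ}
    (h : TendstoLocallyInMeasure μ f g) :
    ∃ s : ℕ → ℕ, StrictMono s ∧ ∀ᵐ x ∂μ, Tendsto (fun k => f (s k) x) atTop (𝓝 (g x)) := by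
  have hj : ∀ j : ℕ, TendstoInMeasure (μ.restrict (spanningSets μ j)) f atTop g :=
    fun j => tendstoInMeasure_iff_dist.mpr
      (h _ (measurableSet_spanningSets μ j) (measure_spanningSets_lt_top μ j))
  have key : ∀ (j : ℕ) (t : ℕ → ℕ), StrictMono t →
      ∃ s : ℕ → ℕ, StrictMono s ∧
        ∀ᵐ x ∂(μ.restrict (spanningSets μ j)),
          Tendsto (fun k => f (t (s k)) x) atTop (𝓝 (g x)) := fun j t ht =>
    (tendstoInMeasure_comp' (hj j) ht.tendsto_atTop).exists_seq_tendsto_ae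
  choose F hF1 hF2 using key
  let Φ : ℕ → {s : ℕ → ℕ // StrictMono s} :=
    fun j => Nat.rec ⟨F 0 id strictMono_id, hF1 0 id strictMono_id⟩
      (fun j ih => ⟨ih.1 ∘ F (j+1) ih.1 ih.2, ih.2.comp (hF1 (j+1) ih.1 ih.2)⟩) j
  have hΦae : ∀ j, ∀ᵐ x ∂(μ.restrict (spanningSets μ j)),
      Tendsto (fun k => f ((Φ j).1 k) x) atTop (𝓝 (g x)) := by
    intro j
    cases j with
    | zero => exact hF2 0 id strictMono_id
    | succ j => exact hF2 (j+1) (Φ j).1 (Φ j).2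
  have hcomp : ∀ j k, j ≤ k → ∀ i, ∃ i', i ≤ i' ∧ (Φ k).1 i = (Φ j).1 i' := by
    intro j k hjk
    induction k, hjk using Nat.le_induction with
    | base => exact fun i => ⟨i, le_rfl, rfl⟩
    | succ k hjk ih =>
      intro i
      have h1 : (Φ (k+1)).1 i = (Φ k).1 (F (k+1) (Φ k).1 (Φ k).2 i) := rfl
      obtain ⟨i', hi', heq⟩ := ih (F (k+1) (Φ k).1 (Φ k).2 i)
      exact ⟨i', le_trans ((hF1 (k+1) (Φ k).1 (Φ k).2).le_apply) hi', h1.trans heq⟩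
  refine ⟨fun k => (Φ k).1 k, ?_, ?_⟩
  · refine strictMono_nat_of_lt_succ fun k => ?_
    have h1 : (Φ (k+1)).1 (k+1) = (Φ k).1 (F (k+1) (Φ k).1 (Φ k).2 (k+1)) := rfl
    rw [h1]
    exact (Φ k).2 (lt_of_lt_of_le (Nat.lt_succ_self k)
      (hF1 (k+1) (Φ k).1 (Φ k).2).le_apply)
  · set P : α → Prop := fun x => Tendsto (fun k => f ((Φ k).1 k) x) atTop (𝓝 (g x)) with hP
    have hpoint : ∀ j x, Tendsto (fun k => f ((Φ j).1 k) x) atTop (𝓝 (g x)) → P x := by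
      intro j x htend
      rw [hP]
      rw [tendsto_def] at htend ⊢
      intro U hU
      have h2 := htend U hU
      rw [mem_atTop_sets] at h2 ⊢
      obtain ⟨M, hM⟩ := h2
      simp only [Set.mem_preimage] at hM ⊢
      refine ⟨max j M, fun k hk => ?_⟩
      obtain ⟨i', hi', heq⟩ := hcomp j k (le_trans (le_max_left _ _) hk) k
      rw [heq]
      exact hM i' (le_trans (le_trans (le_max_right _ _) hk) hi')
    have hPj : ∀ j, μ ({x | ¬ P x} ∩ spanningSets μ j) = 0 := by
      intro j
      have h0 := hΦae j
      rw [ae_iff] at h0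
      rw [Measure.restrict_apply' (measurableSet_spanningSets μ j)] at h0
      refine measure_mono_null (Set.inter_subset_inter_left _ ?_) h0
      intro x hx
      exact fun ht => hx (hpoint j x ht)
    rw [ae_iff]
    refine measure_mono_null ?_ (measure_iUnion_null hPj)
    intro x hx
    have : x ∈ ⋃ j, spanningSets μ j := by rw [iUnion_spanningSets]; trivial
    obtain ⟨j, hj'⟩ := Set.mem_iUnion.mp this
    exact Set.mem_iUnion.mpr ⟨j, hx, hj'⟩

lemma coeFn_finset_sum_smul {α : Type*} [MeasurableSpace α] {μ : Measure α}
    {ι : Type*} (t : Finset ι) (w : ι → ℝ) (z : ι → Lp ℝ 1 μ) :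
    ⇑(∑ i ∈ t, w i • z i) =ᵐ[μ] fun x => ∑ i ∈ t, w i * (z i x) := by
  classical
  induction t using Finset.induction_on with
  | empty => simp only [Finset.sum_empty]; exact Lp.coeFn_zero ℝ 1 μ
  | @insert a s hnotmem ih =>
    rw [Finset.sum_insert hnotmem]
    filter_upwards [Lp.coeFn_add (w a • z a) (∑ i ∈ s, w i • z i),
      Lp.coeFn_smul (w a) (z a), ih] with x h1 h2 h3
    rw [h1]
    simp only [Pi.add_apply, h2, h3, Finset.sum_insert hnotmem]
    rfl

/-- If `u k → v` almost everywhere and `h` belongs to the norm closure of the convex hull of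
every tail of `u`, then `h = v`. -/
lemma ident_of_ae_and_hulls {α : Type*} [MeasurableSpace α] {μ : Measure α}
    {u : ℕ → Lp ℝ 1 μ} {v h : Lp ℝ 1 μ}
    (hae : ∀ᵐ x ∂μ, Tendsto (fun k => u k x) atTop (𝓝 (v x)))
    (hcl : ∀ N : ℕ, h ∈ closure (convexHull ℝ (u '' Set.Ici N))) : h = v := by
  have hc : ∀ N : ℕ, ∃ c ∈ convexHull ℝ (u '' Set.Ici N), dist h c < 1 / (N + 1) := by
    intro N
    exact Metric.mem_closure_iff.mp (hcl N) _ (by positivity)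
  choose c hcmem hcdist using hc
  have repN : ∀ N : ℕ, ∀ᵐ x ∂μ, ∀ r : ℝ,
      (∀ k ≥ N, |u k x - v x| ≤ r) → |c N x - v x| ≤ r := by
    intro N
    obtain ⟨ι, _, w, z, hw0, hw1, hz, hsum⟩ :=
      mem_convexHull_iff_exists_fintype.mp (hcmem N)
    have hk : ∀ i, ∃ k, N ≤ k ∧ z i = u k := by
      intro i
      obtain ⟨k, hk1, hk2⟩ := hz i
      exact ⟨k, hk1, hk2.symm⟩
    choose kk hkk1 hkk2 using hk
    have hcoe : ⇑(c N) =ᵐ[μ] fun x => ∑ i, w i * (z i x) := by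
      rw [← hsum]; exact coeFn_finset_sum_smul Finset.univ w z
    filter_upwards [hcoe] with x hx r hr
    rw [hx]
    have hvx : v x = ∑ i, w i * v x := by
      rw [← Finset.sum_mul, hw1, one_mul]
    rw [hvx, ← Finset.sum_sub_distrib]
    refine (Finset.abs_sum_le_sum_abs _ _).trans ?_
    have hterm : ∀ i ∈ Finset.univ (α := ι), |w i * z i x - w i * v x| ≤ w i * r := by
      intro i _
      rw [← mul_sub, abs_mul, abs_of_nonneg (hw0 i)]
      refine mul_le_mul_of_nonneg_left ?_ (hw0 i)
      rw [hkk2 i]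
      exact hr _ (hkk1 i)
    refine (Finset.sum_le_sum hterm).trans ?_
    rw [← Finset.sum_mul, hw1, one_mul]
  have hcv : ∀ᵐ x ∂μ, Tendsto (fun N => c N x) atTop (𝓝 (v x)) := by
    filter_upwards [hae, ae_all_iff.mpr repN] with x hx hrep
    rw [Metric.tendsto_atTop] at hx ⊢
    intro ε hε
    obtain ⟨M, hM⟩ := hx (ε / 2) (by positivity)
    refine ⟨M, fun N hN => ?_⟩
    have hle : |c N x - v x| ≤ ε / 2 := by
      refine hrep N (ε / 2) fun k hk => ?_
      have := hM k (le_trans hN hk)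
      rw [Real.dist_eq] at this
      exact this.le
    rw [Real.dist_eq]
    linarith
  have hch : Tendsto c atTop (𝓝 h) := by
    rw [tendsto_iff_dist_tendsto_zero]
    refine squeeze_zero (fun N => dist_nonneg) (fun N => ?_)
      tendsto_one_div_add_atTop_nhds_zero_nat
    rw [dist_comm]
    exact (hcdist N).le
  have hmeas : TendstoInMeasure μ (fun N => ⇑(c N)) atTop ⇑h := by
    refine tendstoInMeasure_of_tendsto_eLpNorm (p := 1) one_ne_zero
      (fun N => Lp.aestronglyMeasurable _) (Lp.aestronglyMeasurable _) ?_
    have heq : ∀ N, eLpNorm (⇑(c N) - ⇑h) 1 μ = ENNReal.ofReal ‖c N - h‖ := by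
      intro N
      rw [← eLpNorm_congr_ae (Lp.coeFn_sub (c N) h), Lp.norm_def,
        ENNReal.ofReal_toReal (Lp.eLpNorm_ne_top _)]
    simp only [heq]
    rw [← ENNReal.ofReal_zero]
    refine (ENNReal.continuous_ofReal.tendsto 0).comp ?_
    exact tendsto_iff_norm_sub_tendsto_zero.mp hch
  obtain ⟨ns, hns, hnsae⟩ := hmeas.exists_seq_tendsto_ae
  refine Lp.ext (μ := μ) ?_
  filter_upwards [hcv, hnsae] with x h1 h2
  exact tendsto_nhds_unique h2 (h1.comp hns.tendsto_atTop)

/-- A weak cluster point of a sequence lies in the norm closure of the convex hull of every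
tail (Mazur's theorem). -/
lemma cluster_mem_closure_convexHull {E : Type*} [NormedAddCommGroup E] [NormedSpace ℝ E]
    {u : ℕ → E} {h : WeakSpace ℝ E}
    (hcl : MapClusterPt h atTop (fun k => toWeakSpace ℝ E (u k))) (N : ℕ) :
    (toWeakSpace ℝ E).symm h ∈ closure (convexHull ℝ (u '' Set.Ici N)) := by
  set C := convexHull ℝ (u '' Set.Ici N) with hC
  have hconv : Convex ℝ C := convex_convexHull ℝ _
  have hmazur := hconv.toWeakSpace_closure ℝ
  have hmem : h ∈ closure (⇑(toWeakSpace ℝ E) '' C) := by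
    rw [mem_closure_iff_nhds]
    intro U hU
    obtain ⟨k, hkN, hkU⟩ := (frequently_atTop.mp (mapClusterPt_iff_frequently.mp hcl U hU)) N
    exact ⟨toWeakSpace ℝ E (u k), hkU,
      Set.mem_image_of_mem _ (subset_convexHull ℝ _ (Set.mem_image_of_mem u hkN))⟩
  rw [← hmazur] at hmem
  obtain ⟨y, hy, hyeq⟩ := hmem
  rwa [← hyeq, LinearEquiv.symm_apply_apply]

/-- Let `X` be a closed subspace of `L¹(m)` and `(Tₙ)` an approximating
sequence of operators such that `Tₙ(X) ⊆ X` with `Tₙ(B_X)` relatively weakly compact, and each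
`Tₙ` is continuous for local convergence in measure on norm-bounded sequences.  Then `X` is
nicely placed: its closed unit ball is closed under local convergence in measure. -/
theorem nicely_placed_of_approximating_operators
    {α : Type*} [MeasurableSpace α] (μ : Measure α) [SigmaFinite μ]
    (X : Submodule ℝ (Lp ℝ 1 μ)) (hXc : IsClosed (X : Set (Lp ℝ 1 μ)))
    (T : ℕ → Lp ℝ 1 μ →L[ℝ] Lp ℝ 1 μ)
    (hTapprox : ∀ f : Lp ℝ 1 μ, Tendsto (fun n => ‖T n f - f‖) atTop (𝓝 0))
    (hTX : ∀ n, ∀ f ∈ X, T n f ∈ X)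
    (hTweak : ∀ n, IsCompact (closure
      (⇑(toWeakSpace ℝ (Lp ℝ 1 μ)) '' (⇑(T n) '' {f : Lp ℝ 1 μ | f ∈ X ∧ ‖f‖ ≤ 1}))))
    (hTmeas : ∀ n (f : ℕ → Lp ℝ 1 μ) (g : Lp ℝ 1 μ), (∃ C : ℝ, ∀ k, ‖f k‖ ≤ C) →
      TendstoLocallyInMeasure μ (fun k => ⇑(f k)) ⇑g →
      TendstoLocallyInMeasure μ (fun k => ⇑(T n (f k))) ⇑(T n g))
    (f : ℕ → Lp ℝ 1 μ) (g : Lp ℝ 1 μ)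
    (hfX : ∀ k, f k ∈ X) (hfb : ∀ k, ‖f k‖ ≤ 1)
    (hconv : TendstoLocallyInMeasure μ (fun k => ⇑(f k)) ⇑g) :
    g ∈ X ∧ ‖g‖ ≤ 1 := by
  have key : ∀ n, T n g ∈ X := by
    intro n
    have hTLIM := hTmeas n f g ⟨1, hfb⟩ hconv
    obtain ⟨s, hs, hsae⟩ := hTLIM.exists_seq_tendsto_ae'
    set u : ℕ → Lp ℝ 1 μ := fun k => T n (f (s k)) with hu
    have humem : ∀ k, toWeakSpace ℝ (Lp ℝ 1 μ) (u k) ∈ closure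
        (⇑(toWeakSpace ℝ (Lp ℝ 1 μ)) '' (⇑(T n) '' {f : Lp ℝ 1 μ | f ∈ X ∧ ‖f‖ ≤ 1})) :=
      fun k => subset_closure
        (Set.mem_image_of_mem _ (Set.mem_image_of_mem _ ⟨hfX _, hfb _⟩))
    have hle : Filter.map (fun k => toWeakSpace ℝ (Lp ℝ 1 μ) (u k)) atTop ≤
        𝓟 (closure (⇑(toWeakSpace ℝ (Lp ℝ 1 μ)) ''
          (⇑(T n) '' {f : Lp ℝ 1 μ | f ∈ X ∧ ‖f‖ ≤ 1}))) :=
      Filter.le_principal_iff.mpr (Filter.mem_map.mpr (Filter.univ_mem' humem))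
    obtain ⟨h, hhK, hclh⟩ := (hTweak n).exists_clusterPt hle
    have hmem : ∀ N, (toWeakSpace ℝ (Lp ℝ 1 μ)).symm h ∈
        closure (convexHull ℝ (u '' Set.Ici N)) :=
      fun N => cluster_mem_closure_convexHull hclh N
    have hsae' : ∀ᵐ x ∂μ, Tendsto (fun k => u k x) atTop (𝓝 ((T n g) x)) := hsae
    have heq : (toWeakSpace ℝ (Lp ℝ 1 μ)).symm h = T n g :=
      ident_of_ae_and_hulls hsae' hmem
    have hXmem : (toWeakSpace ℝ (Lp ℝ 1 μ)).symm h ∈ X := by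
      have hsub : convexHull ℝ (u '' Set.Ici 0) ⊆ (X : Set (Lp ℝ 1 μ)) :=
        convexHull_min (by rintro _ ⟨k, -, rfl⟩; exact hTX n _ (hfX _)) X.convex
      exact (closure_minimal hsub hXc) (hmem 0)
    rwa [heq] at hXmem
  constructor
  · have htend : Tendsto (fun n => T n g) atTop (𝓝 g) :=
      tendsto_iff_norm_sub_tendsto_zero.mpr (hTapprox g)
    exact hXc.mem_of_tendsto htend (Filter.Eventually.of_forall key)
  · obtain ⟨s, hs, hsae⟩ := hconv.exists_seq_tendsto_ae'
    have h1 : eLpNorm (⇑g) 1 μ ≤ 1 := by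
      have h2 := Lp.eLpNorm_lim_le_liminf_eLpNorm (p := 1)
        (fun k => Lp.aestronglyMeasurable (f (s k))) (⇑g) hsae
      refine h2.trans ?_
      have h3 : ∀ k, eLpNorm (⇑(f (s k))) 1 μ ≤ 1 := by
        intro k
        have hb := hfb (s k)
        rw [Lp.norm_def] at hb
        have := ENNReal.ofReal_le_ofReal hb
        rwa [ENNReal.ofReal_toReal (Lp.eLpNorm_ne_top _), ENNReal.ofReal_one] at this
      calc atTop.liminf (fun k => eLpNorm (⇑(f (s k))) 1 μ) ≤
          atTop.liminf (fun _ => (1 : ℝ≥0∞)) :=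
            Filter.liminf_le_liminf (Filter.Eventually.of_forall h3)
        _ = 1 := Filter.liminf_const 1
    rw [Lp.norm_def]
    exact ENNReal.toReal_le_of_le_ofReal zero_le_one (by rwa [ENNReal.ofReal_one])
end
end

section
/- Let 𝕋 be the unit circle equipped with its Haar probability measure m. Let F ∈ L^∞(𝕋) be such that the linear functional f ↦ ∫_𝕋 f F dm is sequentially continuous on the closed unit ball of L¹(𝕋) for the topology of convergence in measure; that is, whenever (f_k) is a sequence with ‖f_k‖₁ ≤ 1 converging in measure to f, one has ∫ f_k F dm → ∫ f F dm. Then F = 0 almost everywhere. -/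
open MeasureTheory Filter Topology

open Set in
lemma exists_small_subset (A : Set UnitAddCircle) (hA : MeasurableSet A)
    (hpos : 0 < volume A) (n : ℕ) (hn : 2 ≤ n) :
    ∃ E, MeasurableSet E ∧ E ⊆ A ∧ 0 < volume E ∧
      volume E ≤ ENNReal.ofReal (2 / n) := by
  have hn0 : (0:ℝ) < n := by positivity
  -- the balls cover
  have hcover : A ⊆ ⋃ i ∈ Finset.range n,
      Metric.closedBall (((i / n : ℝ) : UnitAddCircle)) (1 / n) := by
    intro x _
    obtain ⟨r, hr, hrx⟩ := AddCircle.eq_coe_Ico x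
    have h01 : r ∈ Ico (0:ℝ) 1 := hr
    set i : ℕ := ⌊r * n⌋.toNat with hi
    have hrn : 0 ≤ r * n := mul_nonneg h01.1 hn0.le
    have hfl : (0:ℤ) ≤ ⌊r * n⌋ := Int.floor_nonneg.2 hrn
    have hicast : (i : ℝ) = ⌊r * n⌋ := by
      rw [hi]; exact_mod_cast Int.toNat_of_nonneg hfl
    have hile : (i : ℝ) ≤ r * n := by rw [hicast]; exact Int.floor_le _
    have hilt : r * n < i + 1 := by rw [hicast]; exact Int.lt_floor_add_one _
    have hin : i < n := by
      have : (i:ℝ) ≤ r * n := hile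
      have : (i:ℝ) < n := lt_of_le_of_lt this (by nlinarith [h01.2])
      exact_mod_cast this
    refine Set.mem_biUnion (Finset.mem_range.2 hin) ?_
    have hy0 : 0 ≤ r - i / n := by
      rw [sub_nonneg, div_le_iff₀ hn0]; linarith
    have hy1 : r - i / n < 1 / n := by
      rw [sub_lt_iff_lt_add, ← add_div, lt_div_iff₀ hn0]; linarith
    have hdist : dist x (((i / n : ℝ) : UnitAddCircle)) ≤ 1 / n := by
      rw [dist_eq_norm, ← hrx]
      have : (r : UnitAddCircle) - ((i / n : ℝ) : UnitAddCircle)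
          = ((r - i / n : ℝ) : UnitAddCircle) := (AddCircle.coe_sub _ _ _).symm
      rw [this, UnitAddCircle.norm_eq]
      have hround : round (r - i / n) = 0 := by
        apply round_eq_zero_iff.2
        constructor
        · linarith
        · have : (1:ℝ)/n ≤ 1/2 := by
            apply div_le_div_of_nonneg_left <;> [norm_num; norm_num; exact_mod_cast hn]
          linarith
      rw [hround]
      push_cast
      rw [sub_zero, abs_of_nonneg hy0]
      linarith
    exact Metric.mem_closedBall.2 hdist
  -- pigeonhole
  have hle : volume A ≤ ∑ i ∈ Finset.range n,
      volume (A ∩ Metric.closedBall (((i / n : ℝ) : UnitAddCircle)) (1 / n)) := by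
    calc volume A ≤ volume (⋃ i ∈ Finset.range n,
        A ∩ Metric.closedBall (((i / n : ℝ) : UnitAddCircle)) (1 / n)) := by
          apply measure_mono
          intro x hx
          obtain ⟨t, ht, hxt⟩ := Set.mem_iUnion₂.1 (hcover hx)
          exact Set.mem_iUnion₂.2 ⟨t, ht, hx, hxt⟩
      _ ≤ _ := measure_biUnion_finset_le _ _
  have : ∃ i ∈ Finset.range n,
      0 < volume (A ∩ Metric.closedBall (((i / n : ℝ) : UnitAddCircle)) (1 / n)) := by
    by_contra h
    push_neg at h
    simp only [nonpos_iff_eq_zero] at h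
    have : volume A ≤ 0 := hle.trans (le_of_eq (Finset.sum_eq_zero h))
    exact absurd (le_antisymm this zero_le) (ne_of_gt hpos)
  obtain ⟨i, _, hi⟩ := this
  refine ⟨A ∩ Metric.closedBall _ (1/n), hA.inter measurableSet_closedBall,
    Set.inter_subset_left, hi, ?_⟩
  calc volume (A ∩ _) ≤ volume (Metric.closedBall (((i / n : ℝ) : UnitAddCircle)) (1/n)) :=
        measure_mono Set.inter_subset_right
    _ = ENNReal.ofReal (min 1 (2 * (1/n))) := AddCircle.volume_closedBall _ _
    _ ≤ ENNReal.ofReal (2 / n) := by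
        apply ENNReal.ofReal_le_ofReal
        rw [mul_one_div]
        exact min_le_right _ _

/-- On the circle `𝕋` with Haar probability measure, no nonzero
`F ∈ L^∞(𝕋)` induces a functional `f ↦ ∫ f F` on `L¹(𝕋)` that is sequentially continuous on
the closed unit ball of `L¹(𝕋)` for the topology of convergence in measure: if the
functional is continuous in this sense, then `F = 0`. -/
theorem no_inMeasure_continuous_functional_on_L1_circle
    (F : Lp ℝ ⊤ (volume : Measure UnitAddCircle))
    (hF : ∀ (f : ℕ → Lp ℝ 1 (volume : Measure UnitAddCircle))
        (g : Lp ℝ 1 (volume : Measure UnitAddCircle)),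
      (∀ k, ‖f k‖ ≤ 1) → ‖g‖ ≤ 1 →
      TendstoInMeasure (volume : Measure UnitAddCircle) (fun k => ⇑(f k)) atTop ⇑g →
      Tendsto (fun k => ∫ x, f k x * F x) atTop (𝓝 (∫ x, g x * F x))) :
    F = 0 := by
  by_contra hne
  have hFne : ¬ (⇑F =ᵐ[(volume : Measure UnitAddCircle)] (0 : UnitAddCircle → ℝ)) :=
    fun h => hne (Lp.eq_zero_iff_ae_eq_zero.2 h)
  have hmeas : StronglyMeasurable ⇑F := Lp.stronglyMeasurable F
  -- find a level c > 0 at which |F| ≥ c on a set of positive measure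
  obtain ⟨n, hn⟩ : ∃ n : ℕ, 0 < volume {x | 1/((n:ℝ)+1) ≤ |F x|} := by
    by_contra h
    push_neg at h
    apply hFne
    have hU : volume {x | F x ≠ 0} = 0 := by
      have hsub : {x | F x ≠ 0} ⊆ ⋃ n : ℕ, {x | 1/((n:ℝ)+1) ≤ |F x|} := by
        intro x hx
        obtain ⟨m, hm⟩ := exists_nat_one_div_lt (abs_pos.2 hx)
        exact Set.mem_iUnion.2 ⟨m, hm.le⟩
      exact measure_mono_null hsub
        (measure_iUnion_null fun m => nonpos_iff_eq_zero.1 (h m))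
    rw [EventuallyEq, ae_iff]
    simpa using hU
  set c : ℝ := 1/((n:ℝ)+1) with hc_def
  have hc : 0 < c := by positivity
  -- choose the sign
  obtain ⟨s, hs1, hApos⟩ : ∃ s : ℝ, |s| = 1 ∧ 0 < volume {x | c ≤ s * F x} := by
    have hsplit : 0 < volume {x | c ≤ F x} ∨ 0 < volume {x | c ≤ -F x} := by
      by_contra h
      push_neg at h
      obtain ⟨h1, h2⟩ := h
      rw [nonpos_iff_eq_zero] at h1 h2
      have hsub : {x | c ≤ |F x|} ⊆ {x | c ≤ F x} ∪ {x | c ≤ -F x} := by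
        intro x hx
        have hx' : c ≤ |F x| := hx
        rcases le_abs.1 hx' with h | h
        exacts [Or.inl h, Or.inr h]
      exact absurd (measure_mono_null hsub (measure_union_null h1 h2)) (ne_of_gt hn)
    rcases hsplit with h | h
    · exact ⟨1, abs_one, by simpa using h⟩
    · exact ⟨-1, by simp, by simpa [neg_mul, one_mul] using h⟩
  set A : Set UnitAddCircle := {x | c ≤ s * F x} with hA_def
  have hAmeas : MeasurableSet A :=
    measurableSet_le measurable_const (hmeas.measurable.const_mul s)
  -- small subsets of A
  have hEex : ∀ k : ℕ, ∃ E, MeasurableSet E ∧ E ⊆ A ∧ 0 < volume E ∧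
      volume E ≤ ENNReal.ofReal (2 / ((k:ℝ)+2)) := by
    intro k
    have := exists_small_subset A hAmeas hApos (k+2) (by omega)
    simpa [Nat.cast_add] using this
  choose E hEm hEA hEpos hEsmall using hEex
  have hEfin : ∀ k, volume (E k) ≠ ⊤ := fun k => measure_ne_top _ _
  set r : ℕ → ℝ := fun k => (volume (E k)).toReal with hr_def
  have hr : ∀ k, 0 < r k := fun k => ENNReal.toReal_pos (ne_of_gt (hEpos k)) (hEfin k)
  set f : ℕ → Lp ℝ 1 (volume : Measure UnitAddCircle) :=
    fun k => indicatorConstLp 1 (hEm k) (hEfin k) (s / r k) with hf_def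
  -- norms
  have hnorm : ∀ k, ‖f k‖ ≤ 1 := by
    intro k
    rw [hf_def]
    rw [norm_indicatorConstLp one_ne_zero ENNReal.one_ne_top]
    simp only [ENNReal.toReal_one, Real.rpow_one, div_one]
    rw [Real.norm_eq_abs, abs_div, hs1]
    rw [one_div, inv_mul_le_iff₀ (lt_of_lt_of_le (hr k) (le_abs_self _))]
    simp [abs_of_pos (hr k)]; exact le_rfl
  -- convergence in measure to zero
  have hconv : TendstoInMeasure (volume : Measure UnitAddCircle)
      (fun k => ⇑(f k)) atTop ⇑(0 : Lp ℝ 1 (volume : Measure UnitAddCircle)) := by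
    refine TendstoInMeasure.congr
      (fun k => (indicatorConstLp_coeFn (p := 1)).symm)
      (Lp.coeFn_zero ℝ 1 (volume : Measure UnitAddCircle)).symm ?_
    intro ε hε
    have hbound : Tendsto (fun k : ℕ => ENNReal.ofReal (2 / ((k:ℝ)+2))) atTop (𝓝 0) := by
      rw [← ENNReal.ofReal_zero]
      apply ENNReal.tendsto_ofReal
      exact Tendsto.div_atTop tendsto_const_nhds
        (tendsto_atTop_add_const_right _ 2 tendsto_natCast_atTop_atTop)
    refine tendsto_of_tendsto_of_tendsto_of_le_of_le tendsto_const_nhds hbound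
      (fun k => zero_le) (fun k => ?_)
    refine le_trans (measure_mono ?_) (hEsmall k)
    intro x hx
    by_contra hxE
    simp only [Set.mem_setOf_eq] at hx
    rw [Set.indicator_of_notMem hxE] at hx
    simp at hx
    exact absurd hx hε.ne'
  have hkey := hF f 0 hnorm (by simp) hconv
  -- the limit is zero
  have h0 : ∫ x, (0 : Lp ℝ 1 (volume : Measure UnitAddCircle)) x * F x = 0 := by
    refine integral_eq_zero_of_ae ?_
    filter_upwards [Lp.coeFn_zero ℝ 1 (volume : Measure UnitAddCircle)] with x hx
    rw [hx]
    simp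
  rw [h0] at hkey
  -- integrability of F
  have hFint : Integrable (⇑F) (volume : Measure UnitAddCircle) :=
    ((Lp.memLp F).mono_exponent le_top).integrable le_rfl
  -- lower bound on each integral
  have hlow : ∀ k, c ≤ ∫ x, f k x * F x := by
    intro k
    have h1 : ∫ x, f k x * F x = ∫ x, (E k).indicator (fun _ => s / r k) x * F x :=
      integral_congr_ae ((indicatorConstLp_coeFn (p := 1)).mono fun x hx => by
        show (indicatorConstLp 1 (hEm k) (hEfin k) (s / r k) : Lp ℝ 1 (volume : Measure UnitAddCircle)) x * F x = _
        rw [hx])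
    have h2 : ∀ x, (E k).indicator (fun _ => s / r k) x * F x
        = (E k).indicator (fun y => (s / r k) * F y) x := fun x => by
      by_cases hx : x ∈ E k <;>
        simp [Set.indicator_of_mem, Set.indicator_of_notMem, hx]
    rw [h1]
    simp_rw [h2]
    rw [integral_indicator (hEm k), integral_const_mul]
    have hss : ∀ x ∈ E k, c ≤ s * F x := fun x hx => hEA k hx
    have hIon : IntegrableOn (fun x => s * F x) (E k)
        (volume : Measure UnitAddCircle) := (hFint.const_mul s).integrableOn
    have h3 := setIntegral_ge_of_const_le (hEm k) (hEfin k) hss hIon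
    have h4 : c * r k ≤ s * ∫ x in E k, F x := by
      rw [integral_const_mul, smul_eq_mul, mul_comm] at h3; exact h3
    rw [div_mul_eq_mul_div, le_div_iff₀ (hr k)]
    exact h4
  have : c ≤ 0 := ge_of_tendsto' hkey hlow
  linarith
end
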